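/- Let A be a bounded self-adjoint operator on a real Hilbert space H, q ∈ H with Aw = q and ⟨q, w⟩ > 0 (i.e. M_cc < 0). Then the negative signature of A equals the negative signature of the restriction of the quadratic form of A to the hyperplane q⊥ = {V : ⟨q,V⟩ = 0}. -/

import Mathlib

open scoped RealInnerProductSpace

/-- `n` is the negative signature of the quadratic form `f`: the maximal dimension of a
subspace on which `f` is negative definite. -/
def IsNegSig {V : Type*} [AddCommGroup V] [Module ℝ V] (f : V → ℝ) (n : ℕ) : Prop :=
  (∃ W : Submodule ℝ V, Module.finrank ℝ W = n ∧ ∀ v ∈ W, v ≠ 0 → f v < 0) ∧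
  ∀ m : ℕ, (∃ W : Submodule ℝ V, Module.finrank ℝ W = m ∧ ∀ v ∈ W, v ≠ 0 → f v < 0) → m ≤ n

/-- Grillakis–Shatah–Strauss signature count, unstable case `M_cc < 0`
(i.e. `⟨q, w⟩ > 0` with `A w = q`): the negative signature of `A` equals that of the
restriction of its quadratic form to the hyperplane `q^⊥ = {V : ⟨q, V⟩ = 0}`. -/
theorem gss_signature_count_unstable
    {H : Type*} [NormedAddCommGroup H] [InnerProductSpace ℝ H] [CompleteSpace H]
    (A : H →L[ℝ] H) (hA : IsSelfAdjoint A)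
    (q w : H) (hw : A w = q) (hqw : 0 < ⟪q, w⟫) :
    ∀ n m : ℕ, IsNegSig (fun U : H => ⟪A U, U⟫) n →
      IsNegSig (fun U : ((Submodule.span ℝ {q})ᗮ : Submodule ℝ H) => ⟪A U.1, U.1⟫) m →
      n = m := by
  intro n m hn hm
  have hne : ⟪q, w⟫ ≠ 0 := ne_of_gt hqw
  have hsymm : ∀ x y : H, ⟪A x, y⟫ = ⟪x, A y⟫ := fun x y => hA.isSymmetric x y
  have key : ∀ u : H, ⟪A (u - (⟪q, u⟫ / ⟪q, w⟫) • w), u - (⟪q, u⟫ / ⟪q, w⟫) • w⟫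
      = ⟪A u, u⟫ - ⟪q, u⟫ ^ 2 / ⟪q, w⟫ := by
    intro u
    set c := ⟪q, u⟫ / ⟪q, w⟫ with hc
    have h1 : A (u - c • w) = A u - c • q := by rw [map_sub, map_smul, hw]
    rw [h1, inner_sub_left, inner_sub_right, inner_sub_right, real_inner_smul_left,
      real_inner_smul_left, real_inner_smul_right, real_inner_smul_right]
    have h2 : ⟪A u, w⟫ = ⟪q, u⟫ := by rw [hsymm, hw, real_inner_comm]
    rw [h2, hc]
    field_simp
    ring
  have hmem : ∀ u : H, u - (⟪q, u⟫ / ⟪q, w⟫) • w ∈ (Submodule.span ℝ {q})ᗮ := by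
    intro u
    rw [Submodule.mem_orthogonal_singleton_iff_inner_right]
    rw [inner_sub_right, real_inner_smul_right]
    field_simp
    ring
  -- projection onto the hyperplane
  let P : H →ₗ[ℝ] ((Submodule.span ℝ {q})ᗮ : Submodule ℝ H) :=
    { toFun := fun u => ⟨u - (⟪q, u⟫ / ⟪q, w⟫) • w, hmem u⟩
      map_add' := fun u v => by
        ext
        simp only [Submodule.coe_add, inner_add_right, add_div, add_smul]
        abel
      map_smul' := fun c u => by
        ext
        simp only [Submodule.coe_smul, RingHom.id_apply, real_inner_smul_right,
          smul_sub, smul_smul, mul_div_assoc] }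
  apply le_antisymm
  · -- n ≤ m
    obtain ⟨W, hWrank, hWneg⟩ := hn.1
    set L := P.domRestrict W with hL
    have hLinj : Function.Injective L := by
      rw [← LinearMap.ker_eq_bot, LinearMap.ker_eq_bot']
      intro u hu
      have h0 : (u : H) - (⟪q, (u : H)⟫ / ⟪q, w⟫) • w = 0 := congrArg Subtype.val hu
      have heq : (u : H) = (⟪q, (u : H)⟫ / ⟪q, w⟫) • w := by
        rw [sub_eq_zero] at h0; exact h0
      by_contra hu0
      have hne0 : (u : H) ≠ 0 := fun h => hu0 (Subtype.ext h)
      have hneg := hWneg u u.2 hne0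
      have hpos : 0 ≤ ⟪A (u : H), (u : H)⟫ := by
        rw [heq, map_smul, hw, real_inner_smul_left, real_inner_smul_right, ← mul_assoc]
        exact mul_nonneg (mul_self_nonneg _) hqw.le
      simp only at hneg
      linarith
    refine hm.2 n ⟨LinearMap.range L, ?_, ?_⟩
    · rw [← hWrank]
      exact (LinearEquiv.finrank_eq (LinearEquiv.ofInjective L hLinj)).symm
    · rintro v ⟨u, rfl⟩ hv0
      have hne0 : (u : H) ≠ 0 := by
        intro h
        apply hv0
        have h2 : L u = P (u : H) := rfl
        rw [h2, h, map_zero]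
      have hneg := hWneg u u.2 hne0
      simp only at hneg ⊢
      have : (↑(L u) : H) = (u : H) - (⟪q, (u : H)⟫ / ⟪q, w⟫) • w := rfl
      rw [this, key]
      have : 0 ≤ ⟪q, (u : H)⟫ ^ 2 / ⟪q, w⟫ := div_nonneg (sq_nonneg _) hqw.le
      linarith
  · -- m ≤ n
    obtain ⟨W', hWrank, hWneg⟩ := hm.1
    set S := ((Submodule.span ℝ {q})ᗮ : Submodule ℝ H).subtype with hS
    set L := S.domRestrict W' with hL
    have hLinj : Function.Injective L := by
      intro a b hab
      exact Subtype.ext (Subtype.ext hab)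
    refine hn.2 m ⟨LinearMap.range L, ?_, ?_⟩
    · rw [← hWrank]
      exact (LinearEquiv.finrank_eq (LinearEquiv.ofInjective L hLinj)).symm
    · rintro v ⟨u, rfl⟩ hv0
      have hne0 : (u : ((Submodule.span ℝ {q})ᗮ : Submodule ℝ H)) ≠ 0 := by
        intro h
        apply hv0
        simp [hL, hS, LinearMap.domRestrict_apply, h]
      exact hWneg u u.2 hne0
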